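/- If n is a natural number with 2 ≤ n, then for every ordinal γ the γ-fold iterated Hessenberg product of n equals the ordinal power n^γ, i.e. n^{⊙γ} = n^γ. -/

import Mathlib

open Ordinal Order

universe u

/-- Natural (Hessenberg) addition, as `Ordinal.nadd` in the older Mathlib. -/
noncomputable def Ordinal.nadd (a b : Ordinal.{u}) : Ordinal.{u} :=
  max (⨆ x : Set.Iio a, Order.succ (Ordinal.nadd x.1 b))
    (⨆ x : Set.Iio b, Order.succ (Ordinal.nadd a x.1))
termination_by (a, b)
decreasing_by
  · exact Prod.Lex.left _ _ x.2
  · exact Prod.Lex.right _ x.2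

/-- Natural (Hessenberg) multiplication, as `Ordinal.nmul` in the older Mathlib. -/
noncomputable def Ordinal.nmul (a b : Ordinal.{u}) : Ordinal.{u} :=
  sInf {c | ∀ a' < a, ∀ b' < b,
    Ordinal.nadd (Ordinal.nmul a' b) (Ordinal.nmul a b') < Ordinal.nadd c (Ordinal.nmul a' b')}
termination_by (a, b)
decreasing_by
  · exact Prod.Lex.left _ _ ‹_›
  · exact Prod.Lex.right _ ‹_›
  · exact Prod.Lex.left _ _ ‹_›

/-- The `β`-fold iterated Hessenberg (natural) product of `α`:
`α^{⊙0} = 1`, `α^{⊙(β+1)} = α^{⊙β} ⊙ α`, and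
`α^{⊙λ} = sup_{β<λ} α^{⊙β}` for `λ` a limit ordinal. -/
noncomputable def iterNmul (α β : Ordinal) : Ordinal :=
  Ordinal.limitRecOn β 1 (fun _ ih => Ordinal.nmul ih α)
    (fun b _ ih => ⨆ γ : Set.Iio b, ih γ.1 γ.2)

infixl:65 " ♯ " => Ordinal.nadd
infixl:70 " ⨳ " => Ordinal.nmul

namespace Ordinal

theorem nadd_eq (a b : Ordinal.{u}) : a ♯ b =
    max (⨆ x : Set.Iio a, Order.succ (x.1 ♯ b)) (⨆ x : Set.Iio b, Order.succ (a ♯ x.1)) := by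
  rw [Ordinal.nadd]

theorem nadd_lt_nadd_left {b c : Ordinal.{u}} (h : b < c) (a : Ordinal.{u}) : a ♯ b < a ♯ c := by
  rw [nadd_eq a c]
  exact (Order.lt_succ (a ♯ b)).trans_le
    ((Ordinal.le_iSup (fun x : Set.Iio c => Order.succ (a ♯ x.1)) ⟨b, h⟩).trans (le_max_right _ _))

theorem nadd_lt_nadd_right {b c : Ordinal.{u}} (h : b < c) (a : Ordinal.{u}) : b ♯ a < c ♯ a := by
  rw [nadd_eq c a]
  exact (Order.lt_succ (b ♯ a)).trans_le
    ((Ordinal.le_iSup (fun x : Set.Iio c => Order.succ (x.1 ♯ a)) ⟨b, h⟩).trans (le_max_left _ _))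

theorem nadd_le_nadd_left {b c : Ordinal.{u}} (h : b ≤ c) (a : Ordinal.{u}) : a ♯ b ≤ a ♯ c := by
  rcases h.lt_or_eq with h | h
  · exact (nadd_lt_nadd_left h a).le
  · rw [h]

theorem nadd_le_nadd_right {b c : Ordinal.{u}} (h : b ≤ c) (a : Ordinal.{u}) : b ♯ a ≤ c ♯ a := by
  rcases h.lt_or_eq with h | h
  · exact (nadd_lt_nadd_right h a).le
  · rw [h]

theorem nadd_lt_nadd_of_lt_of_lt {a b c d : Ordinal.{u}} (h₁ : a < b) (h₂ : c < d) :
    a ♯ c < b ♯ d :=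
  (nadd_lt_nadd_right h₁ c).trans (nadd_lt_nadd_left h₂ b)

theorem nadd_le_iff {a b c : Ordinal.{u}} :
    a ♯ b ≤ c ↔ (∀ a' < a, a' ♯ b < c) ∧ ∀ b' < b, a ♯ b' < c := by
  rw [nadd_eq, max_le_iff, Ordinal.iSup_le_iff, Ordinal.iSup_le_iff]
  simp only [Order.succ_le_iff, Subtype.forall, Set.mem_Iio]

theorem lt_nadd_iff {a b c : Ordinal.{u}} :
    a < b ♯ c ↔ (∃ b' < b, a ≤ b' ♯ c) ∨ ∃ c' < c, a ≤ b ♯ c' := by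
  rw [← not_le, nadd_le_iff]
  simp only [not_and_or, not_forall, Classical.not_imp, not_lt, exists_prop]

theorem nadd_comm_le (a b : Ordinal.{u}) : a ♯ b ≤ b ♯ a := by
  induction a using Ordinal.induction generalizing b with
  | h a IHa =>
  induction b using Ordinal.induction with
  | h b IHb =>
  rw [nadd_le_iff]
  constructor
  · intro a' ha'
    exact (IHa a' ha' b).trans_lt (nadd_lt_nadd_left ha' b)
  · intro b' hb'
    exact (IHb b' hb').trans_lt (nadd_lt_nadd_right hb' a)

theorem nadd_comm (a b : Ordinal.{u}) : a ♯ b = b ♯ a :=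
  le_antisymm (nadd_comm_le a b) (nadd_comm_le b a)

@[simp]
theorem nadd_zero (a : Ordinal.{u}) : a ♯ 0 = a := by
  induction a using Ordinal.induction with
  | h a IH =>
  apply le_antisymm
  · rw [nadd_le_iff]
    refine ⟨fun a' ha' => ?_, fun b' hb' => absurd hb' (not_lt_of_ge (zero_le : (0 : Ordinal.{u}) ≤ b'))⟩
    rw [IH a' ha']
    exact ha'
  · apply le_of_forall_lt
    intro c hc
    calc c = c ♯ 0 := (IH c hc).symm
      _ < a ♯ 0 := nadd_lt_nadd_right hc 0

@[simp]
theorem zero_nadd (a : Ordinal.{u}) : 0 ♯ a = a := by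
  rw [nadd_comm, nadd_zero]

theorem le_self_nadd {a b : Ordinal.{u}} : a ≤ a ♯ b :=
  (nadd_zero a).symm.le.trans (nadd_le_nadd_left (zero_le : (0 : Ordinal.{u}) ≤ b) a)

theorem nadd_assoc_le (a b c : Ordinal.{u}) : a ♯ b ♯ c ≤ a ♯ (b ♯ c) := by
  induction a using Ordinal.induction generalizing b c with
  | h a IHa =>
  induction b using Ordinal.induction generalizing c with
  | h b IHb =>
  induction c using Ordinal.induction with
  | h c IHc =>
  rw [nadd_le_iff]
  constructor
  · intro d hd
    rcases lt_nadd_iff.1 hd with ⟨a', ha', hle⟩ | ⟨b', hb', hle⟩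
    · exact ((nadd_le_nadd_right hle c).trans (IHa a' ha' b c)).trans_lt
        (nadd_lt_nadd_right ha' _)
    · exact ((nadd_le_nadd_right hle c).trans (IHb b' hb' c)).trans_lt
        (nadd_lt_nadd_left (nadd_lt_nadd_right hb' c) a)
  · intro c' hc'
    exact (IHc c' hc').trans_lt (nadd_lt_nadd_left (nadd_lt_nadd_left hc' b) a)

theorem nadd_assoc (a b c : Ordinal.{u}) : a ♯ b ♯ c = a ♯ (b ♯ c) := by
  apply le_antisymm (nadd_assoc_le a b c)
  calc a ♯ (b ♯ c) = c ♯ b ♯ a := by rw [nadd_comm b c, nadd_comm a (c ♯ b)]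
    _ ≤ c ♯ (b ♯ a) := nadd_assoc_le c b a
    _ = a ♯ b ♯ c := by rw [nadd_comm b a, nadd_comm c (a ♯ b)]

theorem nadd_right_comm (a b c : Ordinal.{u}) : a ♯ b ♯ c = a ♯ c ♯ b := by
  rw [nadd_assoc, nadd_comm b c, ← nadd_assoc]

instance nadd_isAssoc : Std.Associative Ordinal.nadd.{u} := ⟨nadd_assoc⟩

instance nadd_isComm : Std.Commutative Ordinal.nadd.{u} := ⟨nadd_comm⟩

theorem add_le_nadd (a b : Ordinal.{u}) : a + b ≤ a ♯ b := by
  induction b using Ordinal.induction with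
  | h b IH =>
  apply le_of_forall_lt
  intro x hx
  rcases lt_or_ge x a with h | h
  · exact h.trans_le le_self_nadd
  · have hx' : a + (x - a) = x := Ordinal.add_sub_cancel_of_le h
    have hlt : x - a < b := by
      rw [← add_lt_add_iff_left a, hx']
      exact hx
    calc x = a + (x - a) := hx'.symm
      _ ≤ a ♯ (x - a) := IH (x - a) hlt
      _ < a ♯ b := nadd_lt_nadd_left hlt a

theorem nmul_eq (a b : Ordinal.{u}) : a ⨳ b =
    sInf {c | ∀ a' < a, ∀ b' < b, a' ⨳ b ♯ a ⨳ b' < c ♯ a' ⨳ b'} := by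
  rw [Ordinal.nmul]

theorem nmul_nonempty (a b : Ordinal.{u}) :
    {c : Ordinal.{u} | ∀ a' < a, ∀ b' < b, a' ⨳ b ♯ a ⨳ b' < c ♯ a' ⨳ b'}.Nonempty := by
  obtain ⟨M, hM⟩ := (Ordinal.bddAbove_of_small :
    BddAbove (Set.range (fun p : Set.Iio a × Set.Iio b => p.1.1 ⨳ b ♯ a ⨳ p.2.1)))
  refine ⟨Order.succ M, fun a' ha' b' hb' => ?_⟩
  exact (Order.lt_succ_of_le (hM ⟨(⟨a', ha'⟩, ⟨b', hb'⟩), rfl⟩)).trans_le le_self_nadd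

theorem nmul_mem (a b : Ordinal.{u}) :
    ∀ a' < a, ∀ b' < b, a' ⨳ b ♯ a ⨳ b' < a ⨳ b ♯ a' ⨳ b' := by
  have := csInf_mem (nmul_nonempty a b)
  rw [← nmul_eq] at this
  exact this

theorem nmul_le_of_mem {a b c : Ordinal.{u}}
    (h : ∀ a' < a, ∀ b' < b, a' ⨳ b ♯ a ⨳ b' < c ♯ a' ⨳ b') : a ⨳ b ≤ c := by
  rw [nmul_eq a b]
  exact csInf_le' h

theorem exists_of_lt_nmul {a b d : Ordinal.{u}} (h : d < a ⨳ b) :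
    ∃ a' < a, ∃ b' < b, d ♯ a' ⨳ b' ≤ a' ⨳ b ♯ a ⨳ b' := by
  rw [nmul_eq a b] at h
  have := notMem_of_lt_csInf' h
  simp only [Set.mem_setOf_eq, not_forall, Classical.not_imp, not_lt, exists_prop] at this
  exact this

@[simp]
theorem nmul_zero (a : Ordinal.{u}) : a ⨳ 0 = 0 :=
  le_antisymm (nmul_le_of_mem (fun _ _ b' hb' => absurd hb' (not_lt_of_ge (zero_le : (0 : Ordinal.{u}) ≤ b'))))
    zero_le

theorem nmul_add_one (a b : Ordinal.{u}) : a ⨳ (b + 1) = a ⨳ b ♯ a := by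
  induction a using Ordinal.induction generalizing b with
  | h a IHa =>
  induction b using Ordinal.induction with
  | h b IHb =>
  apply le_antisymm
  · apply nmul_le_of_mem
    intro a' ha' b' hb'
    rw [IHa a' ha' b]
    rcases (Order.lt_add_one_iff.1 hb').lt_or_eq with hb | hb
    · calc a' ⨳ b ♯ a' ♯ a ⨳ b' = a' ⨳ b ♯ a ⨳ b' ♯ a' := nadd_right_comm _ _ _
        _ < a ⨳ b ♯ a' ⨳ b' ♯ a := nadd_lt_nadd_of_lt_of_lt (nmul_mem a b a' ha' b' hb) ha'
        _ = a ⨳ b ♯ a ♯ a' ⨳ b' := nadd_right_comm _ _ _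
    · rw [hb]
      calc a' ⨳ b ♯ a' ♯ a ⨳ b = a ⨳ b ♯ a' ⨳ b ♯ a' := by ac_rfl
        _ < a ⨳ b ♯ a' ⨳ b ♯ a := nadd_lt_nadd_left ha' _
        _ = a ⨳ b ♯ a ♯ a' ⨳ b := nadd_right_comm _ _ _
  · apply le_of_forall_lt
    intro c hc
    apply lt_of_not_ge
    intro hc'
    have key : ∀ a' < a, ∀ b' < b + 1, a' ⨳ (b + 1) ♯ a ⨳ b' < c ♯ a' ⨳ b' :=
      fun a' ha' b' hb' => (nmul_mem a (b + 1) a' ha' b' hb').trans_le (nadd_le_nadd_right hc' _)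
    rcases lt_nadd_iff.1 hc with ⟨d, hd, hle⟩ | ⟨a', ha', hle⟩
    · obtain ⟨a', ha', b', hb', hle2⟩ := exists_of_lt_nmul hd
      have hb'' : b' + 1 < b + 1 := Order.lt_add_one_iff.2 (Order.add_one_le_of_lt hb')
      have h1 := key a' ha' (b' + 1) hb''
      rw [IHa a' ha' b, IHb b' hb', IHa a' ha' b'] at h1
      have h2 : c ♯ (a' ⨳ b' ♯ a') ≤ a' ⨳ b ♯ a' ♯ (a ⨳ b' ♯ a) := calc
        c ♯ (a' ⨳ b' ♯ a') ≤ d ♯ a ♯ (a' ⨳ b' ♯ a') := nadd_le_nadd_right hle _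
        _ = d ♯ a' ⨳ b' ♯ (a ♯ a') := by ac_rfl
        _ ≤ a' ⨳ b ♯ a ⨳ b' ♯ (a ♯ a') := nadd_le_nadd_right hle2 _
        _ = a' ⨳ b ♯ a' ♯ (a ⨳ b' ♯ a) := by ac_rfl
      exact absurd (h1.trans_le h2) (lt_irrefl _)
    · have h1 := key a' ha' b (Order.lt_add_one_iff.2 le_rfl)
      rw [IHa a' ha' b] at h1
      have h2 : c ♯ a' ⨳ b ≤ a' ⨳ b ♯ a' ♯ a ⨳ b := calc
        c ♯ a' ⨳ b ≤ a ⨳ b ♯ a' ♯ a' ⨳ b := nadd_le_nadd_right hle _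
        _ = a' ⨳ b ♯ a' ♯ a ⨳ b := by ac_rfl
      exact absurd (h1.trans_le h2) (lt_irrefl _)

end Ordinal

/-! Auxiliary lemmas about natural addition and Cantor monomials. -/

/-- Splitting lemma: if `r, x < ω^e` then `(ω^e * b + r) ♯ x = ω^e * b + (r ♯ x)`. -/
theorem aux_nadd_split (e : Ordinal)
    (hS : ∀ a < (ω : Ordinal) ^ e, ∀ b < (ω : Ordinal) ^ e, a ♯ b < (ω : Ordinal) ^ e) :
    ∀ (b r x : Ordinal), r < ω ^ e → x < ω ^ e →
      ((ω : Ordinal) ^ e * b + r) ♯ x = ω ^ e * b + (r ♯ x) := by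
  intro b r x hr hx
  have hω : (ω : Ordinal) ^ e ≠ 0 := (opow_pos e omega0_pos).ne'
  apply le_antisymm
  · rw [nadd_le_iff]
    constructor
    · intro u hu
      rcases lt_or_ge u ((ω : Ordinal) ^ e * b) with h | h
      · -- u = ω^e * j + s with j < b
        have hj : u / (ω : Ordinal) ^ e < b := (Ordinal.div_lt hω).2 h
        have hs : u % (ω : Ordinal) ^ e < (ω : Ordinal) ^ e := Ordinal.mod_lt u hω
        have hu' : (ω : Ordinal) ^ e * (u / ω ^ e) + u % ω ^ e = u := Ordinal.div_add_mod u _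
        have := aux_nadd_split e hS (u / ω ^ e) (u % ω ^ e) x hs hx
        rw [hu'] at this
        rw [this]
        calc (ω : Ordinal) ^ e * (u / ω ^ e) + (u % ω ^ e ♯ x)
            < ω ^ e * (u / ω ^ e) + ω ^ e := by
              exact add_lt_add_right (hS _ hs _ hx) _
          _ = ω ^ e * (u / ω ^ e + 1) := by rw [mul_add_one]
          _ ≤ ω ^ e * b := mul_le_mul_right (succ_le_of_lt hj) _
          _ ≤ ω ^ e * b + (r ♯ x) := le_self_add
      · -- u = ω^e * b + s with s < r
        have hu' : (ω : Ordinal) ^ e * b + (u - ω ^ e * b) = u :=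
          Ordinal.add_sub_cancel_of_le h
        have hslt : u - (ω : Ordinal) ^ e * b < r := by
          rw [← add_lt_add_iff_left ((ω : Ordinal) ^ e * b), hu']
          exact hu
        have := aux_nadd_split e hS b (u - ω ^ e * b) x (hslt.trans hr) hx
        rw [hu'] at this
        rw [this]
        exact add_lt_add_right (nadd_lt_nadd_right hslt x) _
    · intro x' hx'
      rw [aux_nadd_split e hS b r x' hr (hx'.trans hx)]
      exact add_lt_add_right (nadd_lt_nadd_left hx' r) _
  · apply le_of_forall_lt
    intro β hβ
    rcases lt_or_ge β ((ω : Ordinal) ^ e * b) with h | h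
    · exact h.trans_le (le_self_add.trans le_self_nadd)
    · have hβ' : (ω : Ordinal) ^ e * b + (β - ω ^ e * b) = β :=
        Ordinal.add_sub_cancel_of_le h
      have ht : β - (ω : Ordinal) ^ e * b < r ♯ x := by
        rw [← add_lt_add_iff_left ((ω : Ordinal) ^ e * b), hβ']
        exact hβ
      rcases lt_nadd_iff.1 ht with ⟨r', hr', hle⟩ | ⟨x', hx', hle⟩
      · calc β = ω ^ e * b + (β - ω ^ e * b) := hβ'.symm
          _ ≤ ω ^ e * b + (r' ♯ x) := add_le_add_right hle _
          _ = (ω ^ e * b + r') ♯ x := (aux_nadd_split e hS b r' x (hr'.trans hr) hx).symm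
          _ < (ω ^ e * b + r) ♯ x := nadd_lt_nadd_right (add_lt_add_right hr' _) x
      · calc β = ω ^ e * b + (β - ω ^ e * b) := hβ'.symm
          _ ≤ ω ^ e * b + (r ♯ x') := add_le_add_right hle _
          _ = (ω ^ e * b + r) ♯ x' := (aux_nadd_split e hS b r x' hr (hx'.trans hx)).symm
          _ < (ω ^ e * b + r) ♯ x := nadd_lt_nadd_left hx' _
termination_by b r x => (b, r, x)

/-- Special case: `ω^e * b ♯ x = ω^e * b + x` for `x < ω^e`. -/
theorem aux_nadd_small (e : Ordinal)
    (hS : ∀ a < (ω : Ordinal) ^ e, ∀ b < (ω : Ordinal) ^ e, a ♯ b < (ω : Ordinal) ^ e)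
    (b x : Ordinal) (hx : x < ω ^ e) :
    ((ω : Ordinal) ^ e * b) ♯ x = ω ^ e * b + x := by
  have := aux_nadd_split e hS b 0 x (opow_pos e omega0_pos) hx
  simpa using this

/-- `ω^e * j ♯ ω^e = ω^e * (j+1)`. -/
theorem aux_nadd_mono_one (e : Ordinal)
    (hS : ∀ a < (ω : Ordinal) ^ e, ∀ b < (ω : Ordinal) ^ e, a ♯ b < (ω : Ordinal) ^ e) :
    ∀ j : Ordinal, ((ω : Ordinal) ^ e * j) ♯ ω ^ e = ω ^ e * (j + 1) := by
  intro j
  have hω : (ω : Ordinal) ^ e ≠ 0 := (opow_pos e omega0_pos).ne'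
  apply le_antisymm
  · rw [nadd_le_iff]
    constructor
    · intro u hu
      have hj : u / (ω : Ordinal) ^ e < j := (Ordinal.div_lt hω).2 hu
      have hs : u % (ω : Ordinal) ^ e < (ω : Ordinal) ^ e := Ordinal.mod_lt u hω
      have hu' : (ω : Ordinal) ^ e * (u / ω ^ e) + u % ω ^ e = u := Ordinal.div_add_mod u _
      have h1 : u = ((ω : Ordinal) ^ e * (u / ω ^ e)) ♯ (u % ω ^ e) := by
        rw [aux_nadd_small e hS _ _ hs, hu']
      calc u ♯ ω ^ e
          = (((ω : Ordinal) ^ e * (u / ω ^ e)) ♯ (u % ω ^ e)) ♯ ω ^ e := by rw [← h1]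
        _ = (((ω : Ordinal) ^ e * (u / ω ^ e)) ♯ ω ^ e) ♯ (u % ω ^ e) := nadd_right_comm _ _ _
        _ = ((ω : Ordinal) ^ e * (u / ω ^ e + 1)) ♯ (u % ω ^ e) :=
            by rw [aux_nadd_mono_one e hS (u / ω ^ e)]
        _ = (ω : Ordinal) ^ e * (u / ω ^ e + 1) + u % ω ^ e := aux_nadd_small e hS _ _ hs
        _ < (ω : Ordinal) ^ e * (u / ω ^ e + 1) + ω ^ e := add_lt_add_right hs _
        _ = (ω : Ordinal) ^ e * (u / ω ^ e + 1 + 1) := by rw [mul_add_one, mul_add_one, mul_add_one]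
        _ ≤ (ω : Ordinal) ^ e * (j + 1) := by
            apply mul_le_mul_right
            have : u / (ω : Ordinal) ^ e + 1 ≤ j := succ_le_of_lt hj
            exact add_le_add_left this 1
    · intro c' hc'
      rw [aux_nadd_small e hS j c' hc', mul_add_one]
      exact add_lt_add_right hc' _
  · rw [mul_add_one]
    exact add_le_nadd _ _
termination_by j => j

/-- `ω^e * b ♯ ω^e * k = ω^e * (b + k)` for natural `k`. -/
theorem aux_nadd_mono (e : Ordinal)
    (hS : ∀ a < (ω : Ordinal) ^ e, ∀ b < (ω : Ordinal) ^ e, a ♯ b < (ω : Ordinal) ^ e)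
    (b : Ordinal) (k : ℕ) :
    ((ω : Ordinal) ^ e * b) ♯ (ω ^ e * (k : Ordinal)) = ω ^ e * (b + (k : Ordinal)) := by
  induction k with
  | zero => simp
  | succ k ih =>
    have hcast : ((k + 1 : ℕ) : Ordinal) = (k : Ordinal) + 1 := by push_cast; ring
    rw [hcast, ← aux_nadd_mono_one e hS (k : Ordinal), ← nadd_assoc, ih,
      aux_nadd_mono_one e hS, add_assoc]

/-- Ordinals below `ω^e` are closed under natural addition. -/
theorem aux_nadd_lt_opow : ∀ (e : Ordinal), ∀ a < (ω : Ordinal) ^ e, ∀ b < (ω : Ordinal) ^ e,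
    a ♯ b < (ω : Ordinal) ^ e := by
  intro e
  induction e using Ordinal.limitRecOn with
  | zero =>
    intro a ha b hb
    simp only [opow_zero, Ordinal.lt_one_iff_zero] at *
    simp [ha, hb]
  | add_one d IH =>
    intro a ha b hb
    rw [opow_add_one] at ha hb ⊢
    obtain ⟨m', hm', ham⟩ := (lt_mul_iff_of_isSuccLimit isSuccLimit_omega0).1 ha
    obtain ⟨k', hk', hbk⟩ := (lt_mul_iff_of_isSuccLimit isSuccLimit_omega0).1 hb
    obtain ⟨m, rfl⟩ := lt_omega0.1 hm'
    obtain ⟨k, rfl⟩ := lt_omega0.1 hk'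
    have hω : (ω : Ordinal) ^ d ≠ 0 := (opow_pos d omega0_pos).ne'
    -- decompose a and b
    have hja : a / (ω : Ordinal) ^ d < (m : Ordinal) := (Ordinal.div_lt hω).2 ham
    have hjb : b / (ω : Ordinal) ^ d < (k : Ordinal) := (Ordinal.div_lt hω).2 hbk
    obtain ⟨j, hj⟩ := lt_omega0.1 (hja.trans (nat_lt_omega0 m))
    obtain ⟨i, hi⟩ := lt_omega0.1 (hjb.trans (nat_lt_omega0 k))
    have hra : a % (ω : Ordinal) ^ d < (ω : Ordinal) ^ d := Ordinal.mod_lt a hω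
    have hrb : b % (ω : Ordinal) ^ d < (ω : Ordinal) ^ d := Ordinal.mod_lt b hω
    have ha' : a = ((ω : Ordinal) ^ d * (j : Ordinal)) ♯ (a % ω ^ d) := by
      rw [aux_nadd_small d IH _ _ hra, ← hj, Ordinal.div_add_mod]
    have hb' : b = ((ω : Ordinal) ^ d * (i : Ordinal)) ♯ (b % ω ^ d) := by
      rw [aux_nadd_small d IH _ _ hrb, ← hi, Ordinal.div_add_mod]
    have key : a ♯ b = ((ω : Ordinal) ^ d * ((j : Ordinal) + (i : Ordinal))) ♯
        ((a % ω ^ d) ♯ (b % ω ^ d)) := by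
      conv_lhs => rw [ha', hb']
      rw [← aux_nadd_mono d IH (j : Ordinal) i]
      rw [nadd_assoc, nadd_assoc]
      congr 1
      rw [← nadd_assoc, ← nadd_assoc, nadd_comm (a % ω ^ d)]
    rw [key, aux_nadd_small d IH _ _ (IH _ hra _ hrb)]
    calc (ω : Ordinal) ^ d * ((j : Ordinal) + (i : Ordinal)) + ((a % ω ^ d) ♯ (b % ω ^ d))
        < ω ^ d * ((j : Ordinal) + (i : Ordinal)) + ω ^ d := add_lt_add_right (IH _ hra _ hrb) _
      _ = ω ^ d * ((j : Ordinal) + (i : Ordinal) + 1) := by rw [mul_add_one]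
      _ < ω ^ d * ω := by
          apply mul_lt_mul_of_pos_left _ (opow_pos d omega0_pos)
          have : ((j : Ordinal) + (i : Ordinal) + 1) = ((j + i + 1 : ℕ) : Ordinal) := by
            push_cast; ring
          rw [this]
          exact nat_lt_omega0 _
  | limit l hl IH =>
    intro a ha b hb
    obtain ⟨d₁, hd₁, ha'⟩ := (lt_opow_of_isSuccLimit omega0_ne_zero hl).1 ha
    obtain ⟨d₂, hd₂, hb'⟩ := (lt_opow_of_isSuccLimit omega0_ne_zero hl).1 hb
    have hd : max d₁ d₂ < l := max_lt hd₁ hd₂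
    have ha'' : a < (ω : Ordinal) ^ (max d₁ d₂) :=
      ha'.trans_le (opow_le_opow_right omega0_pos (le_max_left _ _))
    have hb'' : b < (ω : Ordinal) ^ (max d₁ d₂) :=
      hb'.trans_le (opow_le_opow_right omega0_pos (le_max_right _ _))
    exact (IH _ hd _ ha'' _ hb'').trans_le (opow_le_opow_right omega0_pos hd.le)

/-- Natural multiplication of a Cantor monomial with natural coefficient by a natural number. -/
theorem aux_nmul_mono (δ : Ordinal) (c m : ℕ) :
    ((ω : Ordinal) ^ δ * (c : Ordinal)) ⨳ (m : Ordinal) = ω ^ δ * ((c * m : ℕ) : Ordinal) := by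
  induction m with
  | zero => simp
  | succ m ih =>
    have hcast : ((m + 1 : ℕ) : Ordinal) = (m : Ordinal) + 1 := by push_cast; ring
    rw [hcast, nmul_add_one, ih, aux_nadd_mono δ (aux_nadd_lt_opow δ) _ c]
    congr 1
    push_cast
    rw [mul_add_one]

/-- `n^γ` is a Cantor monomial with natural coefficient. -/
theorem aux_pow_eq_mono (n : ℕ) (hn : 2 ≤ n) (γ : Ordinal) :
    ∃ (δ : Ordinal) (c : ℕ), (n : Ordinal) ^ γ = (ω : Ordinal) ^ δ * (c : Ordinal) := by
  have hmod : γ % ω < ω := Ordinal.mod_lt γ omega0_ne_zero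
  obtain ⟨k, hk⟩ := lt_omega0.1 hmod
  refine ⟨γ / ω, n ^ k, ?_⟩
  have h1 : γ = ω * (γ / ω) + (k : Ordinal) := by rw [← hk, Ordinal.div_add_mod]
  conv_lhs => rw [h1]
  rw [opow_add, opow_mul, natCast_opow_omega0 (by omega : 1 < n), ← natCast_opow]

theorem aux_pow_nmul (n : ℕ) (hn : 2 ≤ n) (γ : Ordinal) :
    ((n : Ordinal) ^ γ) ⨳ (n : Ordinal) = (n : Ordinal) ^ (γ + 1) := by
  obtain ⟨δ, c, hc⟩ := aux_pow_eq_mono n hn γ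
  rw [opow_add, opow_one, hc, aux_nmul_mono]
  push_cast
  rw [mul_assoc]

theorem iterNmul_zero (α : Ordinal.{u}) : iterNmul α 0 = 1 :=
  Ordinal.limitRecOn_zero _ _ _

theorem iterNmul_succ (α β : Ordinal.{u}) :
    iterNmul α (Order.succ β) = (iterNmul α β) ⨳ α :=
  Ordinal.limitRecOn_succ _ _ _ _

theorem iterNmul_limit (α β : Ordinal.{u}) (hβ : IsSuccLimit β) :
    iterNmul α β = ⨆ γ : Set.Iio β, iterNmul α γ.1 :=
  Ordinal.limitRecOn_limit _ _ _ _ hβ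

/-- If `n` is a natural number with `2 ≤ n`, then for every ordinal `γ` the
`γ`-fold iterated Hessenberg product of `n` equals the ordinal power `n^γ`. -/
theorem iterNmul_nat (n : ℕ) (hn : 2 ≤ n) (γ : Ordinal) :
    iterNmul (n : Ordinal) γ = (n : Ordinal) ^ γ := by
  induction γ using Ordinal.limitRecOn with
  | zero => rw [iterNmul_zero, opow_zero]
  | add_one β IH =>
    rw [← succ_eq_add_one, iterNmul_succ, IH, aux_pow_nmul n hn, succ_eq_add_one]
  | limit l hl IH =>
    rw [iterNmul_limit _ _ hl]
    have hn0 : (n : Ordinal) ≠ 0 := by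
      simp only [ne_eq, Nat.cast_eq_zero]
      omega
    apply le_antisymm
    · rw [Ordinal.iSup_le_iff]
      rintro ⟨β, hβ⟩
      rw [IH β hβ]
      exact opow_le_opow_right (by exact_mod_cast Nat.pos_of_ne_zero (by omega)) hβ.le
    · rw [opow_le_of_isSuccLimit hn0 hl]
      intro β hβ
      rw [← IH β hβ]
      exact Ordinal.le_iSup _ (⟨β, hβ⟩ : Set.Iio l)
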